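/- Let P be a finite set of primes, k > 0 real, and λ completely multiplicative with λ(1)=1, |λ(p)| ≤ 2. Define for each prime p ∈ P the local factor F_p = ∑_{i=0}^{∞} (λ(p)^i k^i)/(p^i i!) · (∑_{l=0}^{i} ((k−1)^l/l!)·λ(p)^l·λ(p^{i−l})) where λ(p^j) denotes the Hecke eigenvalue satisfying the recursion λ(p^{j+1}) = λ(p)λ(p^j) − λ(p^{j−1}). Then F_p = 1 + k²λ(p)²/p + O(1/p²), with implied constant depending only on k. -/

import Mathlib

/-- Hecke-type bound: |lam j| ≤ j + 1 when |lam 1| ≤ 2 and the recursion holds. -/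
lemma hecke_bound (lam : ℕ → ℝ) (h0 : lam 0 = 1) (h1 : |lam 1| ≤ 2)
    (hrec : ∀ j, lam (j + 2) = lam 1 * lam (j + 1) - lam j) :
    ∀ j, |lam j| ≤ (j : ℝ) + 1 := by
  set t := lam 1 with ht
  have ht2 : (0:ℝ) ≤ 1 - t ^ 2 / 4 := by
    have := abs_le.mp h1
    nlinarith [this.1, this.2]
  set s := Real.sqrt (1 - t ^ 2 / 4) with hsdef
  have hs : s ^ 2 = 1 - t ^ 2 / 4 := Real.sq_sqrt ht2
  set α : ℂ := (t / 2 : ℝ) + (s : ℝ) * Complex.I with hα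
  have habsα : ‖α‖ = 1 := by
    rw [hα, Complex.norm_def, Complex.normSq_add_mul_I]
    rw [show (t/2)^2 + s^2 = 1 by rw [hs]; ring]
    exact Real.sqrt_one
  have habsτ : ‖(t : ℂ) - α‖ = 1 := by
    have : (t : ℂ) - α = ((t / 2 : ℝ) : ℂ) + ((-s : ℝ) : ℂ) * Complex.I := by
      rw [hα]; push_cast; ring
    rw [this, Complex.norm_def, Complex.normSq_add_mul_I]
    rw [show (t/2)^2 + (-s)^2 = 1 by rw [show (-s)^2 = s^2 by ring, hs]; ring]
    exact Real.sqrt_one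
  have hsC : ((s : ℝ) : ℂ) ^ 2 = 1 - (t : ℂ) ^ 2 / 4 := by
    rw [← Complex.ofReal_pow, hs]; push_cast; ring
  have hquad : α ^ 2 = (t : ℂ) * α - 1 := by
    rw [hα]; push_cast
    linear_combination Complex.I ^ 2 * hsC + (1 - (t:ℂ)^2/4) * Complex.I_sq
  have hb : ∀ j, ‖(lam (j + 1) : ℂ) - α * (lam j : ℂ)‖ = 1 := by
    intro j
    induction j with
    | zero =>
      rw [show ((lam 1 : ℂ) - α * (lam 0 : ℂ)) = (t : ℂ) - α by rw [h0, ht]; push_cast; ring]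
      exact habsτ
    | succ j ih =>
      have key : ((lam (j + 2) : ℂ)) - α * (lam (j + 1) : ℂ)
          = ((t : ℂ) - α) * ((lam (j + 1) : ℂ) - α * (lam j : ℂ)) := by
        rw [hrec j]; push_cast
        linear_combination (-(lam j : ℂ)) * hquad
      rw [key, norm_mul, habsτ, ih, one_mul]
  have hstep : ∀ j, |lam (j + 1)| ≤ |lam j| + 1 := by
    intro j
    have h1' : (lam (j + 1) : ℂ) = ((lam (j + 1) : ℂ) - α * (lam j : ℂ)) + α * (lam j : ℂ) := by
      ring
    calc |lam (j + 1)| = ‖(lam (j + 1) : ℂ)‖ := by rw [Complex.norm_real, Real.norm_eq_abs]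
      _ = ‖((lam (j + 1) : ℂ) - α * (lam j : ℂ)) + α * (lam j : ℂ)‖ := by
          rw [sub_add_cancel]
      _ ≤ ‖(lam (j + 1) : ℂ) - α * (lam j : ℂ)‖ + ‖α * (lam j : ℂ)‖ :=
          norm_add_le _ _
      _ = 1 + |lam j| := by rw [hb j, norm_mul, habsα, one_mul, Complex.norm_real, Real.norm_eq_abs]
      _ = |lam j| + 1 := by ring
  intro j
  induction j with
  | zero => simp [h0]
  | succ j ih =>
    calc |lam (j + 1)| ≤ |lam j| + 1 := hstep j
      _ ≤ (j : ℝ) + 1 + 1 := by linarith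
      _ = ((j + 1 : ℕ) : ℝ) + 1 := by push_cast; ring

theorem stmt_19 (k : ℝ) (hk : 0 < k) :
    ∃ C : ℝ, 0 < C ∧ ∀ (p : ℕ), p.Prime → ∀ lam : ℕ → ℝ,
      lam 0 = 1 → |lam 1| ≤ 2 → (∀ j, lam (j + 2) = lam 1 * lam (j + 1) - lam j) →
      |(∑' i : ℕ, lam 1 ^ i * k ^ i / ((p : ℝ) ^ i * (i.factorial : ℝ))
            * ∑ l ∈ Finset.range (i + 1), ((k - 1) ^ l / (l.factorial : ℝ)) * lam 1 ^ l * lam (i - l))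
          - (1 + k ^ 2 * lam 1 ^ 2 / (p : ℝ))| ≤ C / (p : ℝ) ^ 2 := by
  set E : ℝ := Real.exp (2 * |k - 1|) with hE
  have hEpos : 0 < E := Real.exp_pos _
  refine ⟨E * (16 * k ^ 2) * Real.exp (4 * k), by positivity, ?_⟩
  intro p hp lam h0 h1 hrec
  have hp1 : (1 : ℝ) ≤ (p : ℝ) := by exact_mod_cast hp.one_lt.le
  have hppos : (0 : ℝ) < (p : ℝ) := by linarith
  have hlam := hecke_bound lam h0 h1 hrec
  set f : ℕ → ℝ := fun i => lam 1 ^ i * k ^ i / ((p : ℝ) ^ i * (i.factorial : ℝ))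
      * ∑ l ∈ Finset.range (i + 1), ((k - 1) ^ l / (l.factorial : ℝ)) * lam 1 ^ l * lam (i - l)
    with hfdef
  -- bound on the inner sum
  have hS : ∀ i : ℕ, |∑ l ∈ Finset.range (i + 1),
      ((k - 1) ^ l / (l.factorial : ℝ)) * lam 1 ^ l * lam (i - l)| ≤ ((i : ℝ) + 1) * E := by
    intro i
    calc |∑ l ∈ Finset.range (i + 1), ((k - 1) ^ l / (l.factorial : ℝ)) * lam 1 ^ l * lam (i - l)|
        ≤ ∑ l ∈ Finset.range (i + 1), |((k - 1) ^ l / (l.factorial : ℝ)) * lam 1 ^ l * lam (i - l)| :=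
          Finset.abs_sum_le_sum_abs _ _
      _ ≤ ∑ l ∈ Finset.range (i + 1), ((i : ℝ) + 1) * ((2 * |k - 1|) ^ l / (l.factorial : ℝ)) := by
          refine Finset.sum_le_sum fun l hl => ?_
          have hli : l ≤ i := Nat.lt_succ_iff.mp (Finset.mem_range.mp hl)
          have hb : |lam (i - l)| ≤ (i : ℝ) + 1 := by
            refine (hlam (i - l)).trans ?_
            have : ((i - l : ℕ) : ℝ) ≤ (i : ℝ) := by exact_mod_cast Nat.sub_le i l
            linarith
          have h2 : |lam 1| ^ l ≤ 2 ^ l := pow_le_pow_left₀ (abs_nonneg _) h1 l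
          calc |((k - 1) ^ l / (l.factorial : ℝ)) * lam 1 ^ l * lam (i - l)|
              = |k - 1| ^ l / (l.factorial : ℝ) * |lam 1| ^ l * |lam (i - l)| := by
                rw [abs_mul, abs_mul, abs_div, abs_pow, abs_pow, Nat.abs_cast]
            _ ≤ |k - 1| ^ l / (l.factorial : ℝ) * 2 ^ l * ((i : ℝ) + 1) := by
                have hfl : (0:ℝ) < (l.factorial : ℝ) := by exact_mod_cast l.factorial_pos
                have hb0 : (0:ℝ) ≤ (i : ℝ) + 1 := by positivity
                refine mul_le_mul (mul_le_mul_of_nonneg_left h2 (by positivity)) hb (abs_nonneg _) ?_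
                positivity
            _ = ((i : ℝ) + 1) * ((2 * |k - 1|) ^ l / (l.factorial : ℝ)) := by
                rw [mul_pow]; ring
      _ = ((i : ℝ) + 1) * ∑ l ∈ Finset.range (i + 1), (2 * |k - 1|) ^ l / (l.factorial : ℝ) := by
          rw [Finset.mul_sum]
      _ ≤ ((i : ℝ) + 1) * E :=
          mul_le_mul_of_nonneg_left (Real.sum_le_exp_of_nonneg (by positivity) _) (by positivity)
  -- term bound
  have hf : ∀ i : ℕ, |f i| ≤ E * ((4 * k) ^ i / ((p : ℝ) ^ i * (i.factorial : ℝ))) := by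
    intro i
    have hfl : (0:ℝ) < (i.factorial : ℝ) := by exact_mod_cast i.factorial_pos
    have hi2 : ((i : ℝ) + 1) ≤ 2 ^ i := by exact_mod_cast (Nat.lt_two_pow_self (n := i))
    calc |f i| = |lam 1| ^ i * k ^ i / ((p : ℝ) ^ i * (i.factorial : ℝ))
          * |∑ l ∈ Finset.range (i + 1), ((k - 1) ^ l / (l.factorial : ℝ)) * lam 1 ^ l * lam (i - l)| := by
          rw [hfdef]
          rw [abs_mul, abs_div, abs_mul, abs_pow, abs_pow, abs_mul, abs_pow,
            abs_of_pos hk, Nat.abs_cast, Nat.abs_cast]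
      _ ≤ 2 ^ i * k ^ i / ((p : ℝ) ^ i * (i.factorial : ℝ)) * (((i : ℝ) + 1) * E) := by
          refine mul_le_mul ?_ (hS i) (abs_nonneg _) (by positivity)
          have := pow_le_pow_left₀ (abs_nonneg _) h1 i
          gcongr
      _ ≤ 2 ^ i * k ^ i / ((p : ℝ) ^ i * (i.factorial : ℝ)) * (2 ^ i * E) :=
          mul_le_mul_of_nonneg_left (mul_le_mul_of_nonneg_right hi2 hEpos.le) (by positivity)
      _ = E * ((4 * k) ^ i / ((p : ℝ) ^ i * (i.factorial : ℝ))) := by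
          rw [show (4 * k) ^ i = 2 ^ i * (2 ^ i * k ^ i) by rw [show (4:ℝ)*k = 2*(2*k) by ring, mul_pow, mul_pow]]
          ring
  -- summability
  have hsum : Summable f := by
    refine Summable.of_norm_bounded ((Real.summable_pow_div_factorial (4 * k)).mul_left E) ?_
    intro i
    rw [Real.norm_eq_abs]
    refine (hf i).trans ?_
    have hfl : (0:ℝ) < (i.factorial : ℝ) := by exact_mod_cast i.factorial_pos
    have hmono : (4 * k) ^ i / ((p : ℝ) ^ i * (i.factorial : ℝ)) ≤ (4 * k) ^ i / (1 * (i.factorial : ℝ)) := by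
      gcongr
      exact one_le_pow₀ hp1
    rw [one_mul] at hmono
    exact mul_le_mul_of_nonneg_left hmono hEpos.le
  have hsum2 : Summable (fun i => f (i + 2)) := (summable_nat_add_iff 2).mpr hsum
  have hsum1 : Summable (fun i => f (i + 1)) := (summable_nat_add_iff 1).mpr hsum
  -- split off first two terms
  have hsplit : (∑' i, f i) = f 0 + (f 1 + ∑' i, f (i + 2)) := by
    rw [Summable.tsum_eq_zero_add hsum, Summable.tsum_eq_zero_add hsum1]
  have hf0 : f 0 = 1 := by simp [hfdef, h0]
  have hf1 : f 1 = k ^ 2 * lam 1 ^ 2 / (p : ℝ) := by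
    rw [hfdef]
    simp only [Finset.sum_range_succ, Finset.sum_range_zero]
    norm_num [h0]
    ring
  have hdiff : (∑' i, f i) - (1 + k ^ 2 * lam 1 ^ 2 / (p : ℝ)) = ∑' i, f (i + 2) := by
    rw [hsplit, hf0, hf1]; ring
  rw [hdiff]
  -- bound the tail
  have htail : ∀ i : ℕ, |f (i + 2)| ≤ (E * (16 * k ^ 2) / (p : ℝ) ^ 2) * ((4 * k) ^ i / (i.factorial : ℝ)) := by
    intro i
    refine (hf (i + 2)).trans ?_
    have heq : E * ((4 * k) ^ (i + 2) / ((p : ℝ) ^ (i + 2) * ((i + 2).factorial : ℝ)))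
        = (E * (16 * k ^ 2) * (4 * k) ^ i) / ((p : ℝ) ^ 2 * ((p : ℝ) ^ i * ((i + 2).factorial : ℝ))) := by
      rw [pow_add, pow_add]
      ring
    rw [heq, show (E * (16 * k ^ 2) / (p : ℝ) ^ 2) * ((4 * k) ^ i / (i.factorial : ℝ))
        = (E * (16 * k ^ 2) * (4 * k) ^ i) / ((p : ℝ) ^ 2 * (i.factorial : ℝ)) by ring]
    have hd : (i.factorial : ℝ) ≤ (p : ℝ) ^ i * ((i + 2).factorial : ℝ) := by
      calc (i.factorial : ℝ) ≤ ((i + 2).factorial : ℝ) := by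
            exact_mod_cast Nat.factorial_le (by omega)
        _ ≤ (p : ℝ) ^ i * ((i + 2).factorial : ℝ) := by
            nlinarith [one_le_pow₀ (a := (p:ℝ)) (n := i) hp1,
              show (0:ℝ) < ((i+2).factorial : ℝ) by exact_mod_cast (i+2).factorial_pos]
    have hnum : (0:ℝ) ≤ E * (16 * k ^ 2) * (4 * k) ^ i := by positivity
    have hden1 : (0:ℝ) < (p : ℝ) ^ 2 * (i.factorial : ℝ) := by
      have : (0:ℝ) < (i.factorial : ℝ) := by exact_mod_cast i.factorial_pos
      positivity
    gcongr
  have habs : Summable (fun i => |f (i + 2)|) := hsum2.abs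
  calc |∑' i, f (i + 2)| ≤ ∑' i, |f (i + 2)| := by
        have := norm_tsum_le_tsum_norm (f := fun i => f (i + 2))
          (by simpa only [Real.norm_eq_abs] using habs)
        simpa only [Real.norm_eq_abs] using this
    _ ≤ E * (16 * k ^ 2) / (p : ℝ) ^ 2 * Real.exp (4 * k) := by
        refine Real.tsum_le_of_sum_range_le (fun i => abs_nonneg _) fun n => ?_
        calc ∑ i ∈ Finset.range n, |f (i + 2)|
            ≤ ∑ i ∈ Finset.range n, (E * (16 * k ^ 2) / (p : ℝ) ^ 2) * ((4 * k) ^ i / (i.factorial : ℝ)) :=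
              Finset.sum_le_sum fun i _ => htail i
          _ = (E * (16 * k ^ 2) / (p : ℝ) ^ 2) * ∑ i ∈ Finset.range n, (4 * k) ^ i / (i.factorial : ℝ) := by
              rw [Finset.mul_sum]
          _ ≤ (E * (16 * k ^ 2) / (p : ℝ) ^ 2) * Real.exp (4 * k) :=
              mul_le_mul_of_nonneg_left (Real.sum_le_exp_of_nonneg (by positivity) n) (by positivity)
    _ = E * (16 * k ^ 2) * Real.exp (4 * k) / (p : ℝ) ^ 2 := by ring
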